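/- (Difference-Derivative Inequality) Let Ω > 0 and let f : ℝ → ℝ be Ω-bandlimited. Then for every sampling interval T > 0, every L ∈ ℕ with L ≥ 1, and every k ∈ ℤ, the L-th order finite difference of the sample sequence a[k] = f(kT) satisfies |(Δ^L a)[k]| ≤ (TΩe)^L · sup_{t ∈ ℝ} |f(t)|, where e is Euler's number. -/

import Mathlib

open MeasureTheory

/-- `f : ℝ → ℝ` is `Ω`-bandlimited (`Ω` in rad/s): continuous, integrable and bounded,
with Fourier transform `𝓕f(ξ) = ∫ f(t) e^{−2πiξt} dt` vanishing for `|ξ| > Ω/(2π)`. -/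
def IsBandlimited (Ω : ℝ) (f : ℝ → ℝ) : Prop :=
  Continuous f ∧ Integrable f ∧ (∃ C : ℝ, ∀ t : ℝ, |f t| ≤ C) ∧
    ∀ ξ : ℝ, Ω / (2 * Real.pi) < |ξ| →
      FourierTransform.fourier (fun t : ℝ => (f t : ℂ)) ξ = 0

/-- First-order finite difference: `(Δa)[k] = a[k+1] − a[k]`. -/
def fdiff (a : ℤ → ℝ) : ℤ → ℝ := fun k => a (k + 1) - a k

open Complex FourierTransform Metric Real in
/-- Key step: a bandlimited function satisfies `|f (x+T) - f x| ≤ T Ω e ⨆|f|`. -/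
lemma bandlimited_diff_le (Ω : ℝ) (hΩ : 0 < Ω) (f : ℝ → ℝ)
    (hf : IsBandlimited Ω f) (T : ℝ) (hT : 0 ≤ T) (x : ℝ) :
    |f (x + T) - f x| ≤ T * Ω * Real.exp 1 * ⨆ t : ℝ, |f t| := by
  obtain ⟨hcont, hint, ⟨C, hC⟩, hvan⟩ := hf
  set W : ℝ := Ω / (2 * π) with hW
  have hπ : (0:ℝ) < π := Real.pi_pos
  have hWpos : 0 < W := div_pos hΩ (by positivity)
  have hΩW : 2 * π * W = Ω := by rw [hW]; field_simp
  set fc : ℝ → ℂ := fun t => (f t : ℂ) with hfc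
  have hfc_cont : Continuous fc := Complex.continuous_ofReal.comp hcont
  have hfc_int : Integrable fc := hint.ofReal
  set φ : ℝ → ℂ := 𝓕 fc with hφ
  have hφ_cont : Continuous φ := by
    apply VectorFourier.fourierIntegral_continuous Real.continuous_fourierChar
      (by exact continuous_inner) hfc_int
  have hφ_zero : ∀ ξ : ℝ, W < |ξ| → φ ξ = 0 := fun ξ hξ => hvan ξ hξ
  have hφ_supp : HasCompactSupport φ := by
    apply HasCompactSupport.intro (isCompact_Icc (a := -W) (b := W))
    intro ξ hξ
    apply hφ_zero
    simp only [Set.mem_Icc, not_and_or, not_le] at hξ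
    rcases hξ with h | h
    · exact lt_of_lt_of_le (by linarith) (neg_le_abs ξ)
    · exact lt_of_lt_of_le h (le_abs_self ξ)
  have hφ_int : Integrable φ := hφ_cont.integrable_of_hasCompactSupport hφ_supp
  have hinv : 𝓕⁻ φ = fc := hfc_cont.fourierInv_fourier_eq hfc_int hφ_int
  -- the entire extension
  set F : ℂ → ℂ := fun z => ∫ ξ : ℝ, Complex.exp (2 * π * ξ * Complex.I * z) * φ ξ with hF
  -- agreement with f on the real axis
  have hFreal : ∀ t : ℝ, F t = fc t := by
    intro t
    rw [← hinv]
    rw [Real.fourierInv_eq']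
    apply integral_congr_ae
    filter_upwards with ξ
    have h1 : (inner ℝ ξ t : ℝ) = ξ * t := by simp [mul_comm]
    rw [h1, smul_eq_mul]
    push_cast
    ring_nf
  -- basic integrand bound
  have hnorm : ∀ (z : ℂ) (ξ : ℝ), φ ξ ≠ 0 →
      ‖Complex.exp (2 * π * ξ * Complex.I * z)‖ ≤ Real.exp (Ω * |z.im|) := by
    intro z ξ hξ
    have hξW : |ξ| ≤ W := by
      by_contra h
      exact hξ (hφ_zero ξ (lt_of_not_ge h))
    rw [Complex.norm_exp]
    apply Real.exp_le_exp.2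
    have : (2 * π * ξ * Complex.I * z).re = -(2 * π * ξ * z.im) := by
      simp [Complex.mul_re, Complex.mul_im]
      try ring
    rw [this]
    calc -(2 * π * ξ * z.im) ≤ |2 * π * ξ * z.im| := neg_le_abs _
      _ = 2 * π * |ξ| * |z.im| := by
          rw [abs_mul, abs_mul, abs_mul]
          simp [_root_.abs_of_pos hπ]
      _ ≤ 2 * π * W * |z.im| := by
          apply mul_le_mul_of_nonneg_right _ (abs_nonneg _)
          apply mul_le_mul_of_nonneg_left hξW
          positivity
      _ = Ω * |z.im| := by rw [hΩW]
  -- integrability of the integrand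
  have hint_z : ∀ z : ℂ, Integrable (fun ξ : ℝ => Complex.exp (2 * π * ξ * Complex.I * z) * φ ξ) := by
    intro z
    apply Continuous.integrable_of_hasCompactSupport
    · exact (Complex.continuous_exp.comp (by fun_prop)).mul hφ_cont
    · exact hφ_supp.mul_left
  -- F is differentiable
  have hFdiff : Differentiable ℂ F := by
    intro z₀
    have key := hasDerivAt_integral_of_dominated_loc_of_deriv_le (μ := volume) (s := Metric.ball z₀ 1) (Metric.ball_mem_nhds z₀ one_pos)
      (F := fun (z : ℂ) (ξ : ℝ) => Complex.exp (2 * π * ξ * Complex.I * z) * φ ξ)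
      (F' := fun (z : ℂ) (ξ : ℝ) => (2 * π * ξ * Complex.I) * Complex.exp (2 * π * ξ * Complex.I * z) * φ ξ)
      (x₀ := z₀)
      (bound := fun ξ : ℝ => 2 * π * |ξ| * Real.exp (Ω * (|z₀.im| + 1)) * ‖φ ξ‖)
      ?_ ?_ ?_ ?_ ?_ ?_
    · exact key.2.differentiableAt
    · filter_upwards with z
      exact ((Complex.continuous_exp.comp (by fun_prop)).mul hφ_cont).aestronglyMeasurable
    · exact hint_z z₀
    · exact (((by fun_prop : Continuous fun ξ : ℝ => (2 * π * ξ * Complex.I : ℂ)).mul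
        (Complex.continuous_exp.comp (by fun_prop))).mul hφ_cont).aestronglyMeasurable
    · filter_upwards with ξ
      intro z hz
      by_cases hφξ : φ ξ = 0
      · simp [hφξ]
        try positivity
      · have him : |z.im| ≤ |z₀.im| + 1 := by
          have h1 : |z.im - z₀.im| ≤ ‖z - z₀‖ := by
            simpa using Complex.abs_im_le_norm (z - z₀)
          have h2 : ‖z - z₀‖ < 1 := by
            simpa [Complex.dist_eq] using hz
          have := abs_sub_abs_le_abs_sub z.im z₀.im
          linarith [abs_sub_abs_le_abs_sub z.im z₀.im, h1.trans_lt h2]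
        have hξW : |ξ| ≤ W := by
          by_contra h
          exact hφξ (hφ_zero ξ (lt_of_not_ge h))
        rw [norm_mul, norm_mul]
        have e1 : ‖(2 * π * ξ * Complex.I : ℂ)‖ = 2 * π * |ξ| := by
          simp [norm_mul, _root_.abs_of_pos hπ]
        have e2 : ‖Complex.exp (2 * π * ξ * Complex.I * z)‖ ≤ Real.exp (Ω * (|z₀.im| + 1)) := by
          refine (hnorm z ξ hφξ).trans (Real.exp_le_exp.2 ?_)
          have : (0:ℝ) ≤ Ω := hΩ.le
          nlinarith
        rw [e1]
        have h2π : (0:ℝ) ≤ 2 * π * |ξ| := by positivity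
        calc 2 * π * |ξ| * ‖Complex.exp (2 * π * ξ * Complex.I * z)‖ * ‖φ ξ‖
            ≤ 2 * π * |ξ| * Real.exp (Ω * (|z₀.im| + 1)) * ‖φ ξ‖ := by
              apply mul_le_mul_of_nonneg_right _ (norm_nonneg _)
              exact mul_le_mul_of_nonneg_left e2 h2π
          _ = 2 * π * |ξ| * Real.exp (Ω * (|z₀.im| + 1)) * ‖φ ξ‖ := rfl
    · apply Continuous.integrable_of_hasCompactSupport
      · fun_prop
      · exact (hφ_supp.norm).mul_left
    · filter_upwards with ξ
      intro z hz
      have h1 : HasDerivAt (fun w : ℂ => 2 * π * ξ * Complex.I * w) (2 * π * ξ * Complex.I) z := by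
        simpa using (hasDerivAt_id z).const_mul (2 * (π:ℂ) * ξ * Complex.I)
      have h2 := h1.cexp
      have h3 := h2.mul_const (φ ξ)
      refine h3.congr_deriv ?_
      ring
  -- crude bound
  have hFbound1 : ∀ z : ℂ, ‖F z‖ ≤ (∫ ξ : ℝ, ‖φ ξ‖) * Real.exp (Ω * |z.im|) := by
    intro z
    have : ‖F z‖ ≤ ∫ ξ : ℝ, ‖φ ξ‖ * Real.exp (Ω * |z.im|) := by
      apply norm_integral_le_of_norm_le (hφ_int.norm.mul_const _)
      filter_upwards with ξ
      by_cases hφξ : φ ξ = 0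
      · simp [hφξ]
        try positivity
      · rw [norm_mul, mul_comm ‖Complex.exp _‖]
        exact mul_le_mul_of_nonneg_left (hnorm z ξ hφξ) (norm_nonneg _)
    rwa [integral_mul_const] at this
  set A : ℝ := ∫ ξ : ℝ, ‖φ ξ‖ with hA
  set M : ℝ := ⨆ t : ℝ, |f t| with hM
  have hbdd : BddAbove (Set.range fun t : ℝ => |f t|) := ⟨C, by rintro _ ⟨t, rfl⟩; exact hC t⟩
  have hfM : ∀ t : ℝ, |f t| ≤ M := fun t => le_ciSup hbdd t
  have hM0 : 0 ≤ M := (abs_nonneg (f 0)).trans (hfM 0)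
  -- Phragmen-Lindelof in each half plane
  have hhalf : ∀ (σ : ℝ), σ = 1 ∨ σ = -1 → ∀ w : ℂ, 0 ≤ w.re →
      ‖Complex.exp (-(Ω:ℂ) * w) * F (σ * Complex.I * w)‖ ≤ M := by
    intro σ hσ w hw
    have habs : |σ| = 1 := by rcases hσ with h | h <;> simp [h]
    apply PhragmenLindelof.right_half_plane_of_bounded_on_real
      (f := fun w => Complex.exp (-(Ω:ℂ) * w) * F (σ * Complex.I * w)) ?_ ?_ ?_ ?_ hw
    · apply Differentiable.diffContOnCl
      apply ((Complex.differentiable_exp.comp ((differentiable_id.const_mul _))).mul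
        (hFdiff.comp (differentiable_id.const_mul _)))
    · refine ⟨1, one_lt_two, 0, ?_⟩
      rw [Asymptotics.isBigO_iff]
      refine ⟨A, ?_⟩
      filter_upwards [Filter.mem_inf_of_right (Filter.mem_principal_self _)] with z hz
      have hz' : (0:ℝ) < z.re := hz
      have e1 : ‖Complex.exp (-(Ω:ℂ) * z)‖ = Real.exp (-(Ω * z.re)) := by
        rw [Complex.norm_exp]
        congr 1
        simp [Complex.mul_re]
      have e2 : |(σ * Complex.I * z).im| = |σ| * |z.re| := by
        have : (σ * Complex.I * z).im = σ * z.re := by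
          simp [Complex.mul_im, Complex.mul_re]
        rw [this, abs_mul]
      have e3 : ‖F (σ * Complex.I * z)‖ ≤ A * Real.exp (Ω * z.re) := by
        refine (hFbound1 _).trans ?_
        rw [e2, habs, one_mul, _root_.abs_of_pos hz']
      rw [norm_mul, e1]
      calc Real.exp (-(Ω * z.re)) * ‖F (σ * Complex.I * z)‖
          ≤ Real.exp (-(Ω * z.re)) * (A * Real.exp (Ω * z.re)) :=
            mul_le_mul_of_nonneg_left e3 (Real.exp_nonneg _)
        _ = A := by rw [← mul_assoc, mul_comm (Real.exp _) A, mul_assoc, ← Real.exp_add]; simp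
        _ ≤ A * ‖Real.exp (0 * ‖z‖ ^ (1:ℝ))‖ := by
            simp [Real.norm_eq_abs, _root_.abs_of_pos (Real.exp_pos _)]
    · refine ⟨A, ?_⟩
      rw [Filter.eventually_map]
      filter_upwards [Filter.eventually_ge_atTop (0:ℝ)] with t ht
      have e1 : ‖Complex.exp (-(Ω:ℂ) * t)‖ = Real.exp (-(Ω * t)) := by
        rw [Complex.norm_exp]; congr 1; simp [Complex.mul_re]
      have e2 : |((σ:ℂ) * Complex.I * t).im| = |σ| * |t| := by
        have : ((σ:ℂ) * Complex.I * t).im = σ * t := by simp [Complex.mul_im, Complex.mul_re]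
        rw [this, abs_mul]
      have e3 : ‖F (σ * Complex.I * t)‖ ≤ A * Real.exp (Ω * t) := by
        refine (hFbound1 _).trans ?_
        rw [e2, habs, one_mul, _root_.abs_of_nonneg ht]
      rw [norm_mul, e1]
      calc Real.exp (-(Ω * t)) * ‖F ((σ:ℂ) * Complex.I * t)‖
          ≤ Real.exp (-(Ω * t)) * (A * Real.exp (Ω * t)) :=
            mul_le_mul_of_nonneg_left e3 (Real.exp_nonneg _)
        _ = A := by rw [← mul_assoc, mul_comm (Real.exp _) A, mul_assoc, ← Real.exp_add]; simp
    · intro t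
      have e0 : (σ:ℂ) * Complex.I * ((t:ℂ) * Complex.I) = ((-σ * t : ℝ) : ℂ) := by
        push_cast
        rw [mul_assoc, mul_comm Complex.I, mul_assoc, Complex.I_mul_I]
        ring
      have e1 : ‖Complex.exp (-(Ω:ℂ) * ((t:ℂ) * Complex.I))‖ = 1 := by
        rw [Complex.norm_exp]
        have : (-(Ω:ℂ) * ((t:ℂ) * Complex.I)).re = 0 := by simp [Complex.mul_re]
        rw [this, Real.exp_zero]
      rw [norm_mul, e1, one_mul, e0, hFreal]
      simpa [hfc] using hfM (-σ * t)
  -- global bound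
  have hFbound : ∀ z : ℂ, ‖F z‖ ≤ M * Real.exp (Ω * |z.im|) := by
    intro z
    have key : Real.exp (-(Ω * |z.im|)) * ‖F z‖ ≤ M := by
      rcases le_or_gt 0 z.im with h | h
      · have h1 := hhalf 1 (Or.inl rfl) (-Complex.I * z) (by simp [Complex.mul_re]; linarith)
        have e0 : ((1:ℝ):ℂ) * Complex.I * (-Complex.I * z) = z := by
          push_cast
          rw [one_mul, ← mul_assoc, mul_neg, Complex.I_mul_I]
          ring
        rw [e0, norm_mul, Complex.norm_exp] at h1
        have e1 : (-(Ω:ℂ) * (-Complex.I * z)).re = -(Ω * z.im) := by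
          simp [Complex.mul_re, Complex.mul_im]
        rw [e1] at h1
        rw [_root_.abs_of_nonneg h]
        exact h1
      · have h1 := hhalf (-1) (Or.inr rfl) (Complex.I * z) (by simp [Complex.mul_re]; linarith)
        have e0 : ((-1:ℝ):ℂ) * Complex.I * (Complex.I * z) = z := by
          push_cast
          rw [← mul_assoc, mul_assoc _ Complex.I Complex.I, Complex.I_mul_I]
          ring
        rw [e0, norm_mul, Complex.norm_exp] at h1
        have e1 : (-(Ω:ℂ) * (Complex.I * z)).re = Ω * z.im := by
          simp [Complex.mul_re, Complex.mul_im]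
        rw [e1] at h1
        rw [_root_.abs_of_neg h]
        convert h1 using 3
        ring
    calc ‖F z‖ = Real.exp (Ω * |z.im|) * (Real.exp (-(Ω * |z.im|)) * ‖F z‖) := by
          rw [← mul_assoc, ← Real.exp_add]; simp
      _ ≤ Real.exp (Ω * |z.im|) * M :=
          mul_le_mul_of_nonneg_left key (Real.exp_nonneg _)
      _ = M * Real.exp (Ω * |z.im|) := mul_comm _ _
  -- Bernstein: derivative bound at real points
  have hderiv : ∀ t : ℝ, ‖deriv F t‖ ≤ M * Real.exp 1 * Ω := by
    intro t
    have hr : (0:ℝ) < Ω⁻¹ := inv_pos.2 hΩ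
    have key := Complex.norm_deriv_le_of_forall_mem_sphere_norm_le (c := (t:ℂ)) (R := Ω⁻¹)
      (C := M * Real.exp 1) hr hFdiff.diffContOnCl ?_
    · calc ‖deriv F t‖ ≤ M * Real.exp 1 / Ω⁻¹ := key
        _ = M * Real.exp 1 * Ω := by field_simp
    · intro z hz
      have hz' : ‖z - t‖ = Ω⁻¹ := by
        simpa [Complex.dist_eq] using hz
      have him : |z.im| ≤ Ω⁻¹ := by
        have h1 : |(z - t).im| ≤ ‖z - t‖ := Complex.abs_im_le_norm _
        rw [hz'] at h1
        simpa using h1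
      refine (hFbound z).trans ?_
      apply mul_le_mul_of_nonneg_left _ hM0
      apply Real.exp_le_exp.2
      calc Ω * |z.im| ≤ Ω * Ω⁻¹ := mul_le_mul_of_nonneg_left him hΩ.le
        _ = 1 := mul_inv_cancel₀ hΩ.ne'
  -- mean value inequality along the reals
  have hmvt : ‖F ((x + T : ℝ) : ℂ) - F (x : ℝ)‖ ≤ M * Real.exp 1 * Ω * T := by
    have hd : ∀ s : ℝ, s ∈ (Set.univ : Set ℝ) →
        HasDerivWithinAt (fun s : ℝ => F s) (deriv F s) Set.univ s := by
      intro s _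
      exact ((hFdiff s).hasDerivAt.comp_ofReal).hasDerivWithinAt
    have := Convex.norm_image_sub_le_of_norm_hasDerivWithin_le hd
      (fun s _ => hderiv s) convex_univ (Set.mem_univ x) (Set.mem_univ (x + T))
    calc ‖F ((x + T : ℝ) : ℂ) - F (x : ℝ)‖ ≤ (M * Real.exp 1 * Ω) * ‖(x + T) - x‖ := this
      _ = M * Real.exp 1 * Ω * T := by
          rw [add_sub_cancel_left, Real.norm_eq_abs, _root_.abs_of_nonneg hT]
  rw [hFreal, hFreal] at hmvt
  have : ‖((f (x + T) - f x : ℝ) : ℂ)‖ ≤ M * Real.exp 1 * Ω * T := by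
    push_cast
    exact hmvt
  rw [Complex.norm_real, Real.norm_eq_abs] at this
  calc |f (x + T) - f x| ≤ M * Real.exp 1 * Ω * T := this
    _ = T * Ω * Real.exp 1 * M := by ring

open Complex FourierTransform in
/-- The difference `f (· + T) - f` of a bandlimited function is bandlimited. -/
lemma IsBandlimited.shift_sub {Ω : ℝ} {f : ℝ → ℝ} (hf : IsBandlimited Ω f) (T : ℝ) :
    IsBandlimited Ω (fun t => f (t + T) - f t) := by
  obtain ⟨hcont, hint, ⟨C, hC⟩, hvan⟩ := hf
  have hmp : MeasurePreserving (fun t : ℝ => t + T) volume volume :=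
    measurePreserving_add_right volume T
  have hshift_int : Integrable (fun t : ℝ => f (t + T)) :=
    (hmp.integrable_comp hint.aestronglyMeasurable).2 hint
  refine ⟨(hcont.comp (continuous_id.add continuous_const)).sub hcont,
    hshift_int.sub hint, ⟨C + C, fun t => ?_⟩, fun ξ hξ => ?_⟩
  · calc |f (t + T) - f t| ≤ |f (t + T)| + |f t| := abs_sub _ _
      _ ≤ C + C := add_le_add (hC _) (hC _)
  · set fc : ℝ → ℂ := fun t => (f t : ℂ) with hfc
    have hfc_int : Integrable fc := hint.ofReal
    have hshiftc_int : Integrable (fc ∘ fun v : ℝ => v + T) :=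
      (hmp.integrable_comp hfc_int.aestronglyMeasurable).2 hfc_int
    have hdiffc_int : Integrable (fun t : ℝ => ((f (t + T) - f t : ℝ) : ℂ)) :=
      (hshift_int.sub hint).ofReal
    have h0 : 𝓕 fc ξ = 0 := hvan ξ hξ
    have hL : Continuous fun p : ℝ × ℝ => (innerₗ ℝ) p.1 p.2 := continuous_inner
    have hadd := VectorFourier.fourierIntegral_add Real.continuous_fourierChar hL
      (f := fun t : ℝ => ((f (t + T) - f t : ℝ) : ℂ)) (g := fc) hdiffc_int hfc_int
    have hfun : (fun t : ℝ => ((f (t + T) - f t : ℝ) : ℂ)) + fc = fc ∘ fun v : ℝ => v + T := by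
      funext t
      show ((f (t + T) - f t : ℝ) : ℂ) + ((f t : ℝ) : ℂ) = ((f (t + T) : ℝ) : ℂ)
      push_cast
      ring
    rw [hfun] at hadd
    have hshift0 : VectorFourier.fourierIntegral Real.fourierChar volume (innerₗ ℝ)
        (fc ∘ fun v : ℝ => v + T) ξ = 0 := by
      rw [VectorFourier.fourierIntegral_comp_add_right]
      show (Real.fourierChar ((innerₗ ℝ) T ξ) : ℂ) • 𝓕 fc ξ = 0
      rw [h0, smul_zero]
    have := congrFun hadd ξ
    rw [hshift0] at this
    have h2 : 𝓕 (fun t : ℝ => ((f (t + T) - f t : ℝ) : ℂ)) ξ +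
        𝓕 fc ξ = 0 := this.symm
    rw [h0, add_zero] at h2
    exact h2

/-- The iterated finite difference of samples of `f` at step `T`. -/
lemma fdiff_samples (f : ℝ → ℝ) (T : ℝ) :
    fdiff (fun j : ℤ => f (j * T)) = fun j : ℤ => (fun t => f (t + T) - f t) (j * T) := by
  funext j
  show f ((j + 1 : ℤ) * T) - f (j * T) = f (j * T + T) - f (j * T)
  congr 2
  push_cast
  ring

lemma fdiff_iterate_aux (Ω : ℝ) (hΩ : 0 < Ω) (T : ℝ) (hT : 0 < T) (L : ℕ) :
    ∀ (f : ℝ → ℝ), IsBandlimited Ω f → ∀ k : ℤ,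
      |fdiff^[L] (fun j : ℤ => f (j * T)) k| ≤
        (T * Ω * Real.exp 1) ^ L * ⨆ t : ℝ, |f t| := by
  induction L with
  | zero =>
    intro f hf k
    obtain ⟨-, -, ⟨C, hC⟩, -⟩ := hf
    have hbdd : BddAbove (Set.range fun t : ℝ => |f t|) := ⟨C, by rintro _ ⟨t, rfl⟩; exact hC t⟩
    simpa using le_ciSup hbdd ((k : ℝ) * T)
  | succ L ih =>
    intro f hf k
    set c : ℝ := T * Ω * Real.exp 1 with hc
    have hc0 : 0 < c := by positivity
    set g : ℝ → ℝ := fun t => f (t + T) - f t with hg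
    have hgb : IsBandlimited Ω g := hf.shift_sub T
    rw [Function.iterate_succ_apply, fdiff_samples]
    have h1 := ih g hgb k
    have hsup : (⨆ t : ℝ, |g t|) ≤ c * ⨆ t : ℝ, |f t| := by
      apply ciSup_le
      intro t
      exact bandlimited_diff_le Ω hΩ f hf T hT.le t
    calc |fdiff^[L] (fun j : ℤ => g (j * T)) k| ≤ c ^ L * ⨆ t : ℝ, |g t| := h1
      _ ≤ c ^ L * (c * ⨆ t : ℝ, |f t|) :=
          mul_le_mul_of_nonneg_left hsup (pow_nonneg hc0.le L)
      _ = c ^ (L + 1) * ⨆ t : ℝ, |f t| := by ring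

/-- Difference-Derivative Inequality. -/
theorem fdiff_iterate_samples_le (Ω : ℝ) (hΩ : 0 < Ω) (f : ℝ → ℝ)
    (hf : IsBandlimited Ω f) (T : ℝ) (hT : 0 < T) (L : ℕ) (hL : 1 ≤ L) (k : ℤ) :
    |fdiff^[L] (fun j : ℤ => f (j * T)) k| ≤
      (T * Ω * Real.exp 1) ^ L * ⨆ t : ℝ, |f t| :=
  fdiff_iterate_aux Ω hΩ T hT L f hf k
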